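/- arXiv:1809.10769 — 2 statements merged into one kernel-verified Lean document; each statement's English description precedes it below -/
import Mathlib

section
/- Let p ≥ 2 and g ≥ 2 be integers with p ≤ g - 1, and let g₁, …, g_p be positive integers with g₁ + ⋯ + g_p = g - 1. Then ∏_{i=1}^p (2g_i)! ≤ 2^{p-1} · (2g - 2p)!. -/
open Nat Finset

lemma key_fact (a b : ℕ) (ha : 1 ≤ a) (hb : 1 ≤ b) :
    Nat.factorial (2*a) * Nat.factorial (2*b) ≤ 2 * Nat.factorial (2*a + 2*b - 2) := by
  have h1 := Nat.choose_mul_factorial_mul_factorial (show 2*b-2 ≤ 2*b by omega)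
  rw [show 2*b - (2*b-2) = 2 by omega] at h1
  have h2 := Nat.choose_mul_factorial_mul_factorial (show 2*b-2 ≤ 2*a+2*b-2 by omega)
  rw [show (2*a+2*b-2) - (2*b-2) = 2*a by omega] at h2
  have hmono : Nat.choose (2*b) (2*b-2) ≤ Nat.choose (2*a+2*b-2) (2*b-2) :=
    Nat.choose_le_choose _ (by omega)
  have hf2 : Nat.factorial 2 = 2 := rfl
  calc Nat.factorial (2*a) * Nat.factorial (2*b)
      = Nat.factorial (2*a) * (Nat.choose (2*b) (2*b-2) * Nat.factorial (2*b-2) * 2) := by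
        rw [← h1, hf2]
    _ ≤ Nat.factorial (2*a) * (Nat.choose (2*a+2*b-2) (2*b-2) * Nat.factorial (2*b-2) * 2) := by
        apply Nat.mul_le_mul_left
        exact Nat.mul_le_mul_right _ (Nat.mul_le_mul_right _ hmono)
    _ = 2 * (Nat.choose (2*a+2*b-2) (2*b-2) * Nat.factorial (2*b-2) * Nat.factorial (2*a)) := by
        ring
    _ = 2 * Nat.factorial (2*a+2*b-2) := by rw [h2]

lemma prod_fact_aux {ι : Type*} (s : Finset ι) (G : ι → ℕ) (hs : s.Nonempty)
    (hG : ∀ i ∈ s, 1 ≤ G i) :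
    ∏ i ∈ s, Nat.factorial (2 * G i)
      ≤ 2 ^ (s.card - 1) * Nat.factorial (2 * (∑ i ∈ s, G i) - 2 * (s.card - 1)) := by
  induction s using Finset.cons_induction with
  | empty => exact absurd hs (by simp)
  | cons a s h ih =>
    rcases s.eq_empty_or_nonempty with rfl | hsne
    · simp
    · have hGa : 1 ≤ G a := hG a (by simp)
      have hGs : ∀ i ∈ s, 1 ≤ G i := fun i hi => hG i (Finset.mem_cons_of_mem hi)
      have ih' := ih hsne hGs
      have hcard : 1 ≤ s.card := Finset.card_pos.mpr hsne
      have hsumc : s.card ≤ ∑ i ∈ s, G i := by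
        calc s.card = ∑ i ∈ s, 1 := by simp
        _ ≤ ∑ i ∈ s, G i := Finset.sum_le_sum hGs
      set T := ∑ i ∈ s, G i with hT
      set n := s.card with hn
      rw [Finset.prod_cons]
      have hb : 1 ≤ T - (n - 1) := by omega
      have key := key_fact (G a) (T - (n-1)) hGa hb
      have e1 : 2 * (T - (n-1)) = 2 * T - 2 * (n-1) := by omega
      have e2 : 2 * G a + 2 * (T - (n-1)) - 2 = 2 * (G a + T) - 2 * n := by omega
      rw [e2] at key
      rw [e1] at key
      calc Nat.factorial (2 * G a) * ∏ i ∈ s, Nat.factorial (2 * G i)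
          ≤ Nat.factorial (2 * G a) * (2 ^ (n - 1) * Nat.factorial (2 * T - 2 * (n-1))) :=
            Nat.mul_le_mul_left _ ih'
        _ = 2 ^ (n-1) * (Nat.factorial (2 * G a) * Nat.factorial (2 * T - 2 * (n-1))) := by ring
        _ ≤ 2 ^ (n-1) * (2 * Nat.factorial (2 * (G a + T) - 2 * n)) := by
            apply Nat.mul_le_mul_left
            exact key
        _ = 2 ^ (n-1+1) * Nat.factorial (2 * (G a + T) - 2 * n) := by ring
        _ = 2 ^ ((cons a s h).card - 1) * Nat.factorial (2 * (∑ i ∈ cons a s h, G i) - 2 * ((cons a s h).card - 1)) := by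
            rw [Finset.card_cons, Finset.sum_cons]
            congr 2; omega

theorem prod_factorial_bound (p g : ℕ) (hp : 2 ≤ p) (hg : 2 ≤ g) (hpg : p ≤ g - 1)
    (G : Fin p → ℕ) (hG : ∀ i, 1 ≤ G i) (hsum : (∑ i, G i) = g - 1) :
    (∏ i, Nat.factorial (2 * G i)) ≤ 2 ^ (p - 1) * Nat.factorial (2 * g - 2 * p) := by
  have hne : (Finset.univ : Finset (Fin p)).Nonempty := by
    simpa [Finset.univ_nonempty_iff] using Fin.pos_iff_nonempty.mp (by omega)
  have h := prod_fact_aux Finset.univ G hne (fun i _ => hG i)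
  rw [hsum, Finset.card_univ, Fintype.card_fin] at h
  have : 2 * (g - 1) - 2 * (p - 1) = 2 * g - 2 * p := by omega
  rwa [this] at h
end

section
/- Let g₁, …, g_p be positive integers with g₁ + ⋯ + g_p = g - 1, where 2 ≤ p ≤ g-1. Then the sum over all such compositions of ∏_{i=1}^p (2g_i)! / (2g-2)! is at most 1/(p-1)!. -/
open scoped Classical
open Finset Nat


private lemma choose_aux : ∀ n a b : ℕ, a + b = n → 1 ≤ a → 1 ≤ b →
    (a + 1) * (b + 1) ≤ 2 * (a + b).choose a := by
  intro n
  induction n using Nat.strong_induction_on with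
  | _ n ih =>
    intro a b hab ha hb
    match a, ha with
    | 1, _ =>
      simp [Nat.choose_one_right]
    | (a' + 2), _ =>
      match b, hb with
      | 1, _ =>
        have h1 : (a' + 2 + 1).choose (a' + 2) = a' + 3 := by
          rw [Nat.choose_succ_self_right]
        rw [h1]
        omega
      | (b' + 2), _ =>
        have hsplit : (a' + 2 + (b' + 2)).choose (a' + 2)
            = (a' + b' + 3).choose (a' + 1) + (a' + b' + 3).choose (a' + 2) := by
          have h2 : a' + 2 + (b' + 2) = (a' + b' + 3) + 1 := by ring
          rw [h2, Nat.choose_succ_succ' ] -- maybe wrong name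
        have ih1 := ih (a' + b' + 3) (by omega) (a' + 1) (b' + 2) (by ring) (by omega) (by omega)
        have ih2 := ih (a' + b' + 3) (by omega) (a' + 2) (b' + 1) (by ring) (by omega) (by omega)
        have e1 : a' + 1 + (b' + 2) = a' + b' + 3 := by ring
        have e2 : a' + 2 + (b' + 1) = a' + b' + 3 := by ring
        rw [e1] at ih1
        rw [e2] at ih2
        rw [hsplit]
        nlinarith [ih1, ih2]



private lemma fact_mul_fact_le {m n : ℕ} (hm : 2 ≤ m) (hn : 2 ≤ n) :
    m ! * n ! ≤ 2 * (m + n - 2)! := by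
  obtain ⟨a, rfl⟩ : ∃ a, m = a + 1 := ⟨m - 1, by omega⟩
  obtain ⟨b, rfl⟩ : ∃ b, n = b + 1 := ⟨n - 1, by omega⟩
  have ha : 1 ≤ a := by omega
  have hb : 1 ≤ b := by omega
  have hkey := choose_aux (a + b) a b rfl ha hb
  have hsplit : (a + b).choose a * a ! * b ! = (a + b)! := by
    have := Nat.choose_mul_factorial_mul_factorial (Nat.le_add_right a b)
    simpa using this
  have he : a + 1 + (b + 1) - 2 = a + b := by omega
  rw [he]
  calc (a + 1)! * (b + 1)! = ((a + 1) * (b + 1)) * (a ! * b !) := by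
        rw [Nat.factorial_succ, Nat.factorial_succ]; ring
    _ ≤ (2 * (a + b).choose a) * (a ! * b !) := Nat.mul_le_mul_right _ hkey
    _ = 2 * ((a + b).choose a * a ! * b !) := by ring
    _ = 2 * (a + b)! := by rw [hsplit]

private lemma fact_even_le {a b : ℕ} (ha : 1 ≤ a) (hb : 1 ≤ b) :
    (2 * a)! * (2 * b)! ≤ 2 * (2 * a + 2 * b - 2)! :=
  fact_mul_fact_le (by omega) (by omega)

private lemma pow_descFactorial_le (n : ℕ) : ∀ k, 2 ^ k * n.descFactorial k ≤ (2 * n).descFactorial (2 * k) := by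
  intro k
  induction k with
  | zero => simp
  | succ k ih =>
    have h2 : 2 * (k + 1) = (2 * k + 1) + 1 := by ring
    rw [Nat.descFactorial_succ, h2, Nat.descFactorial_succ, Nat.descFactorial_succ]
    have hfac : 2 * (n - k) ≤ (2 * n - (2 * k + 1)) * (2 * n - 2 * k) := by
      rcases le_or_gt n k with h | h
      · have : n - k = 0 := by omega
        simp [this]
      · have h1 : 2 * n - (2 * k + 1) = 2 * (n - k) - 1 := by omega
        have h2 : 2 * n - 2 * k = 2 * (n - k) := by omega
        rw [h1, h2]
        have hm : 1 ≤ 2 * (n - k) - 1 := by omega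
        calc 2 * (n - k) = 1 * (2 * (n - k)) := by ring
          _ ≤ (2 * (n - k) - 1) * (2 * (n - k)) := Nat.mul_le_mul_right _ hm
    calc 2 ^ (k + 1) * ((n - k) * n.descFactorial k)
        = (2 * (n - k)) * (2 ^ k * n.descFactorial k) := by ring
      _ ≤ ((2 * n - (2 * k + 1)) * (2 * n - 2 * k)) * (2 * n).descFactorial (2 * k) :=
          Nat.mul_le_mul hfac ih
      _ = (2 * n - (2 * k + 1)) * ((2 * n - 2 * k) * (2 * n).descFactorial (2 * k)) := by ring

private lemma fact_split {n k : ℕ} (h : k ≤ n) : n ! = n.descFactorial k * (n - k)! := by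
  rw [Nat.descFactorial_eq_factorial_mul_choose]
  rw [← Nat.choose_mul_factorial_mul_factorial h]
  ring



private lemma prod_fact_le {p : ℕ} (f : Fin p → ℕ) (s : Finset (Fin p)) (hs : s.Nonempty) :
    (∀ i ∈ s, 1 ≤ f i) → ∀ S, (∑ i ∈ s, f i) = s.card + S →
      (∏ i ∈ s, (2 * f i)!) ≤ 2 ^ (s.card - 1) * (2 * S + 2)! := by
  induction hs using Finset.Nonempty.cons_induction with
  | singleton a =>
    intro hf S hsum
    simp only [Finset.sum_singleton, Finset.card_singleton] at hsum
    simp only [Finset.prod_singleton, Finset.card_singleton]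
    have : 2 * f a = 2 * S + 2 := by omega
    rw [this]
    simp
  | cons a s ha hs ih =>
    intro hf S hsum
    rw [Finset.sum_cons] at hsum
    rw [Finset.card_cons] at hsum ⊢
    have hge : s.card • 1 ≤ ∑ i ∈ s, f i :=
      Finset.card_nsmul_le_sum s f 1 (fun i hi => hf i (Finset.mem_cons_of_mem hi))
    simp only [smul_eq_mul, mul_one] at hge
    have hfa : 1 ≤ f a := hf a (Finset.mem_cons_self a s)
    obtain ⟨S', hS'⟩ : ∃ S', ∑ i ∈ s, f i = s.card + S' := ⟨∑ i ∈ s, f i - s.card, by omega⟩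
    have hkey : f a + S' = S + 1 := by omega
    have ihb := ih (fun i hi => hf i (Finset.mem_cons_of_mem hi)) S' hS'
    have hc : 1 ≤ s.card := Finset.card_pos.mpr hs
    rw [Finset.prod_cons]
    calc (2 * f a)! * ∏ i ∈ s, (2 * f i)!
        ≤ (2 * f a)! * (2 ^ (s.card - 1) * (2 * S' + 2)!) := Nat.mul_le_mul_left _ ihb
      _ = 2 ^ (s.card - 1) * ((2 * f a)! * (2 * (S' + 1))!) := by ring_nf
      _ ≤ 2 ^ (s.card - 1) * (2 * (2 * f a + 2 * (S' + 1) - 2)!) :=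
          Nat.mul_le_mul_left _ (fact_even_le hfa (by omega))
      _ = 2 ^ (s.card + 1 - 1) * (2 * S + 2)! := by
          have h1 : 2 * f a + 2 * (S' + 1) - 2 = 2 * S + 2 := by omega
          have h2 : s.card + 1 - 1 = (s.card - 1) + 1 := by omega
          rw [h1, h2, pow_succ]
          ring

variable {p : ℕ}

private def psum (f : Fin p → ℕ) (k : ℕ) : ℕ :=
  ∑ j ∈ Finset.range (k + 1), (if h : j < p then f ⟨j, h⟩ else 0)

private lemma psum_succ (f : Fin p → ℕ) (k : ℕ) :
    psum f (k + 1) = psum f k + (if h : k + 1 < p then f ⟨k + 1, h⟩ else 0) :=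
  Finset.sum_range_succ _ _

private lemma psum_zero (f : Fin p → ℕ) (hp : 0 < p) : psum f 0 = f ⟨0, hp⟩ := by
  simp [psum, hp]

private lemma psum_mono (f : Fin p → ℕ) : Monotone (psum f) :=
  monotone_nat_of_le_succ fun k => by rw [psum_succ]; exact Nat.le_add_right _ _

private lemma psum_strict {f : Fin p → ℕ} (hpos : ∀ i, 1 ≤ f i) {k1 k2 : ℕ}
    (h12 : k1 < k2) (h2 : k2 < p) : psum f k1 < psum f k2 := by
  have hlt : k1 + 1 < p := by omega
  have hstep : psum f k1 < psum f (k1 + 1) := by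
    rw [psum_succ, dif_pos hlt]
    have := hpos ⟨k1 + 1, hlt⟩
    omega
  exact hstep.trans_le (psum_mono f (by omega))

private lemma psum_one_le {f : Fin p → ℕ} (hpos : ∀ i, 1 ≤ f i) (hp : 0 < p) (k : ℕ) :
    1 ≤ psum f k := by
  have h0 : 1 ≤ psum f 0 := by rw [psum_zero f hp]; exact hpos _
  exact h0.trans (psum_mono f (Nat.zero_le k))

private lemma psum_last (f : Fin p → ℕ) (hp : 0 < p) : psum f (p - 1) = ∑ i, f i := by
  have h : p - 1 + 1 = p := by omega
  rw [psum, h, ← Fin.sum_univ_eq_sum_range (fun j => if h : j < p then f ⟨j, h⟩ else 0) p]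
  apply Finset.sum_congr rfl
  intro i _
  simp [i.isLt]

private lemma card_comp_le (g : ℕ) (hp : 2 ≤ p) (hg : 2 ≤ g) (hpg : p ≤ g - 1) :
    ((Fintype.piFinset fun _ : Fin p => Finset.range g).filter
        (fun f => (∀ i, 1 ≤ f i) ∧ (∑ i, f i) = g - 1)).card ≤ (g - 1).choose (p - 1) := by
  have hp0 : 0 < p := by omega
  set Φ := (Fintype.piFinset fun _ : Fin p => Finset.range g).filter
      (fun f => (∀ i, 1 ≤ f i) ∧ (∑ i, f i) = g - 1) with hΦ
  -- facts for members
  have hmem : ∀ f ∈ Φ, (∀ i, 1 ≤ f i) ∧ (∑ i, f i) = g - 1 := by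
    intro f hf
    exact (Finset.mem_filter.mp hf).2
  set T : (Fin p → ℕ) → Finset ℕ :=
    fun f => Finset.image (fun i : Fin (p - 1) => psum f i - 1) Finset.univ with hT
  have hmono : ∀ f : Fin p → ℕ, (∀ i, 1 ≤ f i) →
      StrictMono (fun i : Fin (p - 1) => psum f (i : ℕ) - 1) := by
    intro f hpos i j hij
    have hij' : (i : ℕ) < (j : ℕ) := hij
    have hjp : (j : ℕ) < p := by have := j.isLt; omega
    have hlt := psum_strict hpos hij' hjp
    have h1 := psum_one_le hpos hp0 (i : ℕ)
    simp only []
    omega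
  have hcard : ∀ f : Fin p → ℕ, (∀ i, 1 ≤ f i) → (T f).card = p - 1 := by
    intro f hpos
    rw [hT]
    rw [Finset.card_image_of_injective _ (hmono f hpos).injective, Finset.card_univ,
      Fintype.card_fin]
  have hmaps : ∀ f ∈ Φ, T f ∈ Finset.powersetCard (p - 1) (Finset.range (g - 1)) := by
    intro f hf
    obtain ⟨hpos, hsum⟩ := hmem f hf
    rw [Finset.mem_powersetCard]
    refine ⟨?_, hcard f hpos⟩
    intro x hx
    rw [hT] at hx
    obtain ⟨i, -, rfl⟩ := Finset.mem_image.mp hx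
    have hip : (i : ℕ) < p - 1 := i.isLt
    have hlt := psum_strict hpos (show (i : ℕ) < p - 1 from hip) (by omega)
    rw [psum_last f hp0, hsum] at hlt
    have h1 := psum_one_le hpos hp0 (i : ℕ)
    rw [Finset.mem_range]
    omega
  have hinj : Set.InjOn T ↑Φ := by
    intro f1 hf1 f2 hf2 hTT
    obtain ⟨hpos1, hsum1⟩ := hmem f1 (Finset.mem_coe.mp hf1)
    obtain ⟨hpos2, hsum2⟩ := hmem f2 (Finset.mem_coe.mp hf2)
    have hc1 := hcard f1 hpos1
    have hu1 : (fun i : Fin (p - 1) => psum f1 (i : ℕ) - 1) = (T f1).orderEmbOfFin hc1 :=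
      Finset.orderEmbOfFin_unique hc1
        (fun x => by rw [hT]; exact Finset.mem_image_of_mem _ (Finset.mem_univ x))
        (hmono f1 hpos1)
    have hu2 : (fun i : Fin (p - 1) => psum f2 (i : ℕ) - 1) = (T f1).orderEmbOfFin hc1 :=
      Finset.orderEmbOfFin_unique hc1
        (fun x => by rw [hTT, hT]; exact Finset.mem_image_of_mem _ (Finset.mem_univ x))
        (hmono f2 hpos2)
    have hEq : ∀ i : Fin (p - 1), psum f1 (i : ℕ) - 1 = psum f2 (i : ℕ) - 1 :=
      fun i => congrFun (hu1.trans hu2.symm) i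
    have hSeq : ∀ k, k < p → psum f1 k = psum f2 k := by
      intro k hk
      rcases lt_or_eq_of_le (show k ≤ p - 1 by omega) with h | h
      · have := hEq ⟨k, h⟩
        simp only [] at this
        have h11 := psum_one_le hpos1 hp0 k
        have h12 := psum_one_le hpos2 hp0 k
        omega
      · subst h
        rw [psum_last f1 hp0, psum_last f2 hp0, hsum1, hsum2]
    funext i
    rcases Nat.eq_zero_or_pos (i : ℕ) with h0 | h0
    · have hieq : i = ⟨0, hp0⟩ := Fin.ext h0
      rw [hieq, ← psum_zero f1 hp0, ← psum_zero f2 hp0]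
      exact hSeq 0 hp0
    · obtain ⟨k, hk⟩ : ∃ k, (i : ℕ) = k + 1 := ⟨(i : ℕ) - 1, by omega⟩
      have hk1p : k + 1 < p := by rw [← hk]; exact i.isLt
      have hieq : i = ⟨k + 1, hk1p⟩ := Fin.ext hk
      have e1 := psum_succ f1 k
      have e2 := psum_succ f2 k
      rw [dif_pos hk1p] at e1 e2
      have hs1 := hSeq k (by omega)
      have hs2 := hSeq (k + 1) hk1p
      rw [hieq]
      omega
  calc Φ.card ≤ (Finset.powersetCard (p - 1) (Finset.range (g - 1))).card :=
        Finset.card_le_card_of_injOn T hmaps hinj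
    _ = (g - 1).choose (p - 1) := by
        rw [Finset.card_powersetCard, Finset.card_range]

theorem sum_over_compositions_bound (g p : ℕ) (hp : 2 ≤ p) (hg : 2 ≤ g) (hpg : p ≤ g - 1) :
    (∑ f ∈ (Fintype.piFinset fun _ : Fin p => Finset.range g).filter
        (fun f => (∀ i, 1 ≤ f i) ∧ (∑ i, f i) = g - 1),
        ((∏ i, Nat.factorial (2 * f i) : ℕ) : ℝ) / Nat.factorial (2 * g - 2)) ≤
      1 / Nat.factorial (p - 1) := by
  have hp0 : 0 < p := by omega
  haveI : Nonempty (Fin p) := ⟨⟨0, hp0⟩⟩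
  set Φ := (Fintype.piFinset fun _ : Fin p => Finset.range g).filter
      (fun f => (∀ i, 1 ≤ f i) ∧ (∑ i, f i) = g - 1) with hΦ
  set B : ℝ := ((2 ^ (p - 1) * (2 * g - 2 * p)! : ℕ) : ℝ) / ((2 * g - 2)! : ℝ) with hB
  have hterm : ∀ f ∈ Φ, ((∏ i, (2 * f i)! : ℕ) : ℝ) / ((2 * g - 2)! : ℝ) ≤ B := by
    intro f hf
    obtain ⟨hpos, hsum⟩ := (Finset.mem_filter.mp hf).2
    have hprod : (∏ i, (2 * f i)!) ≤ 2 ^ (p - 1) * (2 * g - 2 * p)! := by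
      have hcardu : (Finset.univ : Finset (Fin p)).card = p := by simp
      have h1 : (∑ i ∈ Finset.univ, f i) = (Finset.univ : Finset (Fin p)).card + (g - 1 - p) := by
        rw [hcardu, hsum]; omega
      have h2 := prod_fact_le f Finset.univ Finset.univ_nonempty (fun i _ => hpos i)
        (g - 1 - p) h1
      rw [hcardu] at h2
      have he : 2 * (g - 1 - p) + 2 = 2 * g - 2 * p := by omega
      rwa [he] at h2
    rw [hB]
    have h0 : (0:ℝ) < ((2 * g - 2)! : ℝ) := by positivity
    exact div_le_div_of_nonneg_right (by exact_mod_cast hprod) h0.le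
  have hsum_le := Finset.sum_le_card_nsmul Φ _ B hterm
  have hN := card_comp_le g hp hg hpg
  rw [← hΦ] at hN
  have hnat : Φ.card * (2 ^ (p - 1) * (2 * g - 2 * p)!) * (p - 1)! ≤ (2 * g - 2)! := by
    calc Φ.card * (2 ^ (p - 1) * (2 * g - 2 * p)!) * (p - 1)!
        ≤ (g - 1).choose (p - 1) * (2 ^ (p - 1) * (2 * g - 2 * p)!) * (p - 1)! := by
          exact Nat.mul_le_mul_right _ (Nat.mul_le_mul_right _ hN)
      _ = ((p - 1)! * (g - 1).choose (p - 1)) * 2 ^ (p - 1) * (2 * g - 2 * p)! := by ring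
      _ = (g - 1).descFactorial (p - 1) * 2 ^ (p - 1) * (2 * g - 2 * p)! := by
          rw [Nat.descFactorial_eq_factorial_mul_choose]
      _ = (2 ^ (p - 1) * (g - 1).descFactorial (p - 1)) * (2 * g - 2 * p)! := by ring
      _ ≤ (2 * (g - 1)).descFactorial (2 * (p - 1)) * (2 * g - 2 * p)! :=
          Nat.mul_le_mul_right _ (pow_descFactorial_le (g - 1) (p - 1))
      _ = (2 * g - 2).descFactorial (2 * p - 2) * ((2 * g - 2) - (2 * p - 2))! := by
          rw [show 2 * (g - 1) = 2 * g - 2 by omega, show 2 * (p - 1) = 2 * p - 2 by omega,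
            show 2 * g - 2 * p = (2 * g - 2) - (2 * p - 2) by omega]
      _ = (2 * g - 2)! := (fact_split (show 2 * p - 2 ≤ 2 * g - 2 by omega)).symm
  refine le_trans hsum_le ?_
  rw [nsmul_eq_mul, hB, mul_div_assoc']
  rw [div_le_div_iff₀ (by positivity) (by positivity), one_mul]
  exact_mod_cast hnat
end
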